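/- Let R be a commutative ring, S ⊆ R a submonoid, A an m × n matrix over R, and L an o × m matrix over R whose rows generate the row syzygies of A (i.e., L·A = 0 and every row vector T with T·A = 0 is an R-linear combination of the rows of L). Then the image of L in the localization S⁻¹R generates the row syzygies of the image of A: for every row vector T' over S⁻¹R with T'·A = 0 there is a row vector U over S⁻¹R with U·L = T'. -/

import Mathlib

open Matrix

theorem stmt_0 {R : Type*} [CommRing R] (S : Submonoid R)
    {m n o : ℕ} (A : Matrix (Fin m) (Fin n) R) (L : Matrix (Fin o) (Fin m) R)
    (hLA : L * A = 0)
    (hgen : ∀ T : Fin m → R, T ᵥ* A = 0 → ∃ U : Fin o → R, U ᵥ* L = T) :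
    ∀ T' : Fin m → Localization S,
      T' ᵥ* A.map (algebraMap R (Localization S)) = 0 →
      ∃ U' : Fin o → Localization S,
        U' ᵥ* L.map (algebraMap R (Localization S)) = T' := by
  intro T' hT'
  set f := algebraMap R (Localization S) with hf
  -- clear denominators of T'
  obtain ⟨b, hb⟩ := IsLocalization.exist_integer_multiples_of_finite S T'
  choose T hT using hb
  -- f ((T ᵥ* A) j) = 0 for all j
  have hTA : ∀ j, f ((T ᵥ* A) j) = 0 := by
    intro j
    have h1 : f ((T ᵥ* A) j) = ∑ i, ((b : R) • T' i) * f (A i j) := by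
      simp only [vecMul, dotProduct, map_sum, _root_.map_mul, hf, hT]
    have h2 : (T' ᵥ* A.map f) j = ∑ i, T' i * f (A i j) := by
      simp [vecMul, dotProduct, Matrix.map_apply]
    have h3 : (T' ᵥ* A.map f) j = 0 := by rw [hT']; rfl
    rw [h1]
    calc ∑ i, ((b : R) • T' i) * f (A i j) = (b : R) • ∑ i, T' i * f (A i j) := by
          rw [Finset.smul_sum]; simp [smul_mul_assoc]
      _ = 0 := by rw [← h2, h3, smul_zero]
  choose c hc using fun j => (IsLocalization.map_eq_zero_iff S (Localization S) _).mp (hTA j)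
  set d : S := ∏ j, c j with hd
  have hdT : ((d : R) • T) ᵥ* A = 0 := by
    funext j
    have hdj : (d : R) = (∏ j' ∈ Finset.univ.erase j, (c j' : R)) * (c j : R) := by
      rw [hd, Submonoid.coe_finset_prod, ← Finset.mul_prod_erase _ _ (Finset.mem_univ j),
        mul_comm]
    simp only [vecMul, dotProduct, Pi.smul_apply, smul_eq_mul, Pi.zero_apply]
    calc ∑ i, (d : R) * T i * A i j = (d : R) * ∑ i, T i * A i j := by
          rw [Finset.mul_sum]; exact Finset.sum_congr rfl fun i _ => (mul_assoc _ _ _)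
      _ = 0 := by
          rw [hdj, mul_assoc]
          have : (c j : R) * ∑ i, T i * A i j = 0 := hc j
          rw [this, mul_zero]
  obtain ⟨U, hU⟩ := hgen _ hdT
  set e : Localization S := IsLocalization.mk' (Localization S) 1 (d * b) with he
  refine ⟨fun i => e * f (U i), ?_⟩
  funext k
  have hUL : (U ᵥ* L) k = (d : R) * T k := by rw [hU]; simp
  have h1 : ((fun i => e * f (U i)) ᵥ* L.map f) k = e * f ((U ᵥ* L) k) := by
    simp only [vecMul, dotProduct, map_sum, _root_.map_mul, Matrix.map_apply,
      Finset.mul_sum, mul_assoc]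
  rw [h1, hUL, _root_.map_mul]
  have hedb : e * f ((d : R) * (b : R)) = 1 := by
    rw [he, ← map_one f, hf]
    have := IsLocalization.mk'_spec (Localization S) (1 : R) (d * b)
    simpa using this
  calc e * (f (d : R) * f (T k)) = e * f (d : R) * ((b : R) • T' k) := by rw [hT, mul_assoc]
    _ = (e * f ((d : R) * (b : R))) * T' k := by
        rw [Algebra.smul_def, _root_.map_mul]; ring
    _ = T' k := by rw [hedb, one_mul]
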